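/- arXiv:2005.03942 — 5 statements merged into one kernel-verified Lean document; each statement's English description precedes it below -/
import Mathlib

section
/- If G is a permutation group on a finite set Ω of size t with minimum base size b, then every independent set in Ω has size at most b · log₂ t. Consequently H(G) ≤ b(G) · log₂ t. -/
/-- The pointwise stabilizer of a set `Λ` in a group `G` acting on `Ω`. -/
def ptStab (G : Type*) [Group G] {Ω : Type*} [MulAction G Ω] (Λ : Set Ω) : Subgroup G :=
  ⨅ ω ∈ Λ, MulAction.stabilizer G ω

/-- `Λ` is an independent set: its pointwise stabilizer differs from that of
every proper subset. -/
def IsIndep (G : Type*) [Group G] {Ω : Type*} [MulAction G Ω] (Λ : Set Ω) : Prop :=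
  ∀ Δ : Set Ω, Δ ⊂ Λ → ptStab G Δ ≠ ptStab G Λ

/-- The height of `G` on `Ω`: the maximum size of an independent set. -/
noncomputable def height (G : Type*) [Group G] (Ω : Type*) [MulAction G Ω] : ℕ :=
  sSup {k | ∃ Λ : Set Ω, IsIndep G Λ ∧ Λ.ncard = k}

section aux
variable {G Ω : Type*} [Group G] [MulAction G Ω]

lemma mem_ptStab {g : G} {Λ : Set Ω} : g ∈ ptStab G Λ ↔ ∀ ω ∈ Λ, g • ω = ω := by
  simp [ptStab, Subgroup.mem_iInf, MulAction.mem_stabilizer_iff]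

lemma ptStab_union (A B : Set Ω) : ptStab G (A ∪ B) = ptStab G A ⊓ ptStab G B := by
  unfold ptStab; exact iInf_union

lemma ptStab_anti {A B : Set Ω} (h : A ⊆ B) : ptStab G B ≤ ptStab G A :=
  biInf_mono h

lemma indep_subset [Finite Ω] {Λ Λ' : Set Ω} (hsub : Λ' ⊆ Λ) (h : IsIndep G Λ) :
    IsIndep G Λ' := by
  intro Δ hΔ heq
  apply h (Δ ∪ (Λ \ Λ'))
  · constructor
    · intro x hx
      rcases hx with hx | hx
      · exact hsub (hΔ.1 hx)
      · exact hx.1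
    · intro hle
      obtain ⟨x, hxΛ', hxΔ⟩ := Set.exists_of_ssubset hΔ
      exact hxΔ ((hle (hsub hxΛ')).resolve_right (fun hx => hx.2 hxΛ'))
  · have hΛeq : Λ' ∪ (Λ \ Λ') = Λ := Set.union_diff_cancel hsub
    calc ptStab G (Δ ∪ (Λ \ Λ')) = ptStab G Δ ⊓ ptStab G (Λ \ Λ') := ptStab_union _ _
      _ = ptStab G Λ' ⊓ ptStab G (Λ \ Λ') := by rw [heq]
      _ = ptStab G (Λ' ∪ (Λ \ Λ')) := (ptStab_union _ _).symm
      _ = ptStab G Λ := by rw [hΛeq]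

lemma two_pow_le [Finite Ω] [Finite G] :
    ∀ n : ℕ, ∀ Λ : Set Ω, Λ.ncard = n → IsIndep G Λ →
      2 ^ n * Nat.card (ptStab G Λ) ≤ Nat.card G := by
  intro n
  induction n with
  | zero =>
    intro Λ hΛ _
    have : Λ = ∅ := by
      rw [← Set.ncard_eq_zero (Set.toFinite Λ)] at *; exact hΛ
    subst this
    have : ptStab G (∅ : Set Ω) = ⊤ := by simp [ptStab]
    rw [this]
    simpa using le_of_eq (Subgroup.card_top (G := G))
  | succ n ih =>
    intro Λ hΛ hind
    have hne : Λ.Nonempty := by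
      rw [← Set.ncard_pos (Set.toFinite Λ), hΛ]; omega
    obtain ⟨ω, hω⟩ := hne
    set Λ' := Λ \ {ω} with hΛ'def
    have hΛ'card : Λ'.ncard = n := by
      rw [hΛ'def, Set.ncard_diff_singleton_of_mem hω, hΛ]
      omega
    have hΛ'ind : IsIndep G Λ' := indep_subset Set.diff_subset hind
    have hlt : ptStab G Λ < ptStab G Λ' := by
      refine lt_of_le_of_ne (ptStab_anti Set.diff_subset) ?_
      intro heq
      exact hind Λ' (Set.sdiff_singleton_ssubset.mpr hω) heq.symm
    have hdvd : Nat.card (ptStab G Λ) ∣ Nat.card (ptStab G Λ') :=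
      Subgroup.card_dvd_of_le hlt.le
    have hcardlt : Nat.card (ptStab G Λ) < Nat.card (ptStab G Λ') := by
      have hss : (ptStab G Λ : Set G) ⊂ (ptStab G Λ' : Set G) := SetLike.coe_ssubset_coe.mpr hlt
      have := Set.ncard_lt_ncard hss (Set.toFinite _)
      rw [← Nat.card_coe_set_eq, ← Nat.card_coe_set_eq] at this
      simpa using this
    have h2 : 2 * Nat.card (ptStab G Λ) ≤ Nat.card (ptStab G Λ') := by
      obtain ⟨k, hk⟩ := hdvd
      have hpos : 0 < Nat.card (ptStab G Λ) := Nat.card_pos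
      have : 2 ≤ k := by nlinarith [hk ▸ hcardlt]
      nlinarith
    calc 2 ^ (n+1) * Nat.card (ptStab G Λ) = 2 ^ n * (2 * Nat.card (ptStab G Λ)) := by ring
      _ ≤ 2 ^ n * Nat.card (ptStab G Λ') := Nat.mul_le_mul_left _ h2
      _ ≤ Nat.card G := ih Λ' hΛ'card hΛ'ind

end aux

/-- If `b` is the minimum base size of `G` on `Ω` (with `|Ω| = t`), then every
independent set has size at most `b · log₂ t`; hence `H(G) ≤ b(G) · log₂ t`. -/
theorem indep_le_base_mul_log {G Ω : Type*} [Group G] [Finite Ω] [MulAction G Ω]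
    [FaithfulSMul G Ω] (b : ℕ) (B : Set Ω)
    (hB : ptStab G B = ⊥) (hBcard : B.ncard = b)
    (hbmin : ∀ B' : Set Ω, ptStab G B' = ⊥ → b ≤ B'.ncard) :
    (∀ Λ : Set Ω, IsIndep G Λ → (Λ.ncard : ℝ) ≤ b * Real.logb 2 (Nat.card Ω)) ∧
    (height G Ω : ℝ) ≤ b * Real.logb 2 (Nat.card Ω) := by
  haveI : Finite G := Finite.of_injective _ (MulAction.toPerm_injective (α := G) (β := Ω))
  -- |G| ≤ |Ω|^b
  have hGle : Nat.card G ≤ Nat.card Ω ^ b := by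
    have hinj : Function.Injective (fun (g : G) (x : B) => g • (x : Ω)) := by
      intro g h hgh
      have : h⁻¹ * g ∈ ptStab G B := by
        rw [mem_ptStab]
        intro ω hω
        have := congrFun hgh ⟨ω, hω⟩
        simp only at this
        rw [mul_smul, this, inv_smul_smul]
      rw [hB, Subgroup.mem_bot] at this
      calc g = h * (h⁻¹ * g) := by group
        _ = h := by rw [this, mul_one]
    calc Nat.card G ≤ Nat.card (B → Ω) := Nat.card_le_card_of_injective _ hinj
      _ = Nat.card Ω ^ Nat.card B := Nat.card_fun
      _ = Nat.card Ω ^ b := by rw [Nat.card_coe_set_eq, hBcard]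
  have main : ∀ Λ : Set Ω, IsIndep G Λ → (Λ.ncard : ℝ) ≤ b * Real.logb 2 (Nat.card Ω) := by
    intro Λ hΛ
    set n := Λ.ncard with hn
    have h2n : 2 ^ n ≤ Nat.card Ω ^ b := by
      calc 2 ^ n ≤ 2 ^ n * Nat.card (ptStab G Λ) :=
            Nat.le_mul_of_pos_right _ Nat.card_pos
        _ ≤ Nat.card G := two_pow_le n Λ rfl hΛ
        _ ≤ Nat.card Ω ^ b := hGle
    rcases Nat.eq_zero_or_pos n with h0 | hpos
    · rw [h0]
      push_cast
      have hlb : (0:ℝ) ≤ Real.logb 2 (Nat.card Ω) := by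
        rcases Nat.eq_zero_or_pos (Nat.card Ω) with ht | ht
        · simp [ht]
        · exact Real.logb_nonneg one_lt_two (by exact_mod_cast ht)
      exact mul_nonneg (Nat.cast_nonneg b) hlb
    · have hreal : ((2:ℝ) ^ n) ≤ (Nat.card Ω : ℝ) ^ b := by exact_mod_cast h2n
      have := Real.logb_le_logb_of_le (b := 2) one_lt_two (by positivity) hreal
      rw [Real.logb_pow, Real.logb_pow, Real.logb_self_eq_one one_lt_two, mul_one] at this
      exact this
  refine ⟨main, ?_⟩
  have hbdd : BddAbove {k | ∃ Λ : Set Ω, IsIndep G Λ ∧ Λ.ncard = k} := by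
    refine ⟨Nat.card G, fun k hk => ?_⟩
    obtain ⟨Λ, hΛ, rfl⟩ := hk
    have := two_pow_le (G := G) Λ.ncard Λ rfl hΛ
    have h1 : 2 ^ Λ.ncard ≤ Nat.card G :=
      le_trans (Nat.le_mul_of_pos_right _ Nat.card_pos) this
    calc Λ.ncard ≤ 2 ^ Λ.ncard := Nat.le_of_lt Nat.lt_two_pow_self
      _ ≤ Nat.card G := h1
  have hmem : height G Ω ∈ {k | ∃ Λ : Set Ω, IsIndep G Λ ∧ Λ.ncard = k} := by
    apply Nat.sSup_mem
    · exact ⟨0, ∅, fun Δ hΔ => absurd (Set.empty_subset Δ) hΔ.2, by simp⟩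
    · exact hbdd
  obtain ⟨Λ, hΛ, hcard⟩ := hmem
  rw [← hcard]
  exact main Λ hΛ
end

section
/- The relational complexity of a finite permutation group G on Ω satisfies RC(G) ≤ H(G) + 1, where H(G) is the height (maximum size of an independent set). -/
/-- `I ∼_r J`: every subtuple of size `r` of `I` can be mapped by an element of `G`
to the corresponding subtuple of `J`. -/
def REquiv (G : Type*) [Group G] {Ω : Type*} [MulAction G Ω] {n : ℕ} (r : ℕ)
    (I J : Fin n → Ω) : Prop :=
  ∀ k : Fin r → Fin n, ∃ h : G, ∀ i : Fin r, h • I (k i) = J (k i)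

/-- The relational complexity of `G` on `Ω`: the least `r` such that for every `n ≥ r`,
`r`-equivalence of `n`-tuples implies `n`-equivalence. -/
noncomputable def relComplexity (G : Type*) [Group G] (Ω : Type*) [MulAction G Ω] : ℕ :=
  sInf {r | ∀ n : ℕ, r ≤ n → ∀ I J : Fin n → Ω, REquiv G r I J → REquiv G n I J}

lemma mem_ptStab_iff {G : Type*} [Group G] {Ω : Type*} [MulAction G Ω] {Λ : Set Ω} {g : G} :
    g ∈ ptStab G Λ ↔ ∀ ω ∈ Λ, g • ω = ω := by
  simp [ptStab, Subgroup.mem_iInf, MulAction.mem_stabilizer_iff]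

/-- `RC(G) ≤ H(G) + 1`. -/
theorem relComplexity_le_height_add_one {G Ω : Type*} [Group G] [Finite G] [Finite Ω]
    [MulAction G Ω] [FaithfulSMul G Ω] :
    relComplexity G Ω ≤ height G Ω + 1 := by
  classical
  set H := height G Ω with hH
  apply Nat.sInf_le
  intro n hn I J hIJ
  -- choose a minimal-cardinality finset of indices whose image has the same
  -- pointwise stabilizer as the whole range of I
  set T : Set ℕ := {m | ∃ s : Finset (Fin n),
      ptStab G (I '' ↑s) = ptStab G (Set.range I) ∧ s.card = m} with hT
  have hTne : T.Nonempty := ⟨(Finset.univ : Finset (Fin n)).card, Finset.univ, by simp, rfl⟩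
  obtain ⟨s, hs, hscard⟩ := Nat.sInf_mem hTne
  have hmin : ∀ s' : Finset (Fin n), ptStab G (I '' ↑s') = ptStab G (Set.range I) →
      s.card ≤ s'.card := by
    intro s' hs'
    rw [hscard]
    exact Nat.sInf_le ⟨s', hs', rfl⟩
  -- I is injective on s
  have hinj : Set.InjOn I ↑s := by
    intro j1 hj1 j2 hj2 hIe
    by_contra hne
    have himg : I '' ↑(s.erase j2) = I '' ↑s := by
      apply Set.Subset.antisymm
      · exact Set.image_mono (by simp [Finset.erase_subset])
      · rintro ω ⟨j, hj, rfl⟩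
        rcases eq_or_ne j j2 with rfl | hjj
        · exact ⟨j1, Finset.mem_coe.mpr (Finset.mem_erase.mpr ⟨hne, hj1⟩), hIe⟩
        · exact ⟨j, Finset.mem_coe.mpr (Finset.mem_erase.mpr ⟨hjj, hj⟩), rfl⟩
    have := hmin (s.erase j2) (by rw [himg]; exact hs)
    have hlt : (s.erase j2).card < s.card := Finset.card_erase_lt_of_mem hj2
    omega
  -- the image is an independent set
  set Λ : Set Ω := I '' ↑s with hΛ
  have hindep : IsIndep G Λ := by
    intro Δ hΔ hstab
    obtain ⟨ω, hωΛ, hωΔ⟩ := Set.exists_of_ssubset hΔ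
    set s' : Finset (Fin n) := s.filter (fun j => I j ∈ Δ) with hs'
    have himg : I '' ↑s' = Δ := by
      apply Set.Subset.antisymm
      · rintro δ ⟨j, hj, rfl⟩
        simp only [hs', Finset.coe_filter, Set.mem_setOf_eq] at hj
        exact hj.2
      · intro δ hδ
        obtain ⟨j, hj, rfl⟩ := hΔ.subset hδ
        exact ⟨j, by simp [hs', Finset.mem_coe.mp hj, hδ], rfl⟩
    obtain ⟨j0, hj0, rfl⟩ := hωΛ
    have hj0s' : j0 ∉ s' := by simp [hs', hωΔ]
    have hss : s' ⊂ s := Finset.ssubset_iff_of_subset (Finset.filter_subset _ _) |>.mpr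
      ⟨j0, Finset.mem_coe.mp hj0, hj0s'⟩
    have h1 := hmin s' (by rw [himg, hstab, hΛ]; exact hs)
    have h2 := Finset.card_lt_card hss
    omega
  -- s.card ≤ H
  have hcard_le : s.card ≤ H := by
    have hΛcard : Λ.ncard = s.card := by
      rw [hΛ, Set.ncard_image_of_injOn hinj, Set.ncard_coe_finset]
    have hbdd : BddAbove {k | ∃ Λ : Set Ω, IsIndep G Λ ∧ Λ.ncard = k} := by
      refine ⟨Nat.card Ω, ?_⟩
      rintro k ⟨Λ', _, rfl⟩
      calc Λ'.ncard ≤ (Set.univ : Set Ω).ncard :=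
            Set.ncard_le_ncard (Set.subset_univ _) Set.finite_univ
        _ = Nat.card Ω := Set.ncard_univ Ω
    have : Λ.ncard ≤ H := le_csSup hbdd ⟨Λ, hindep, rfl⟩
    omega
  have hnpos : 0 < n := by omega
  -- for each index i, find g_i moving I to J on s ∪ {i}
  have key : ∀ i : Fin n, ∃ g : G, (∀ j ∈ s, g • I j = J j) ∧ g • I i = J i := by
    intro i
    obtain ⟨g, hg⟩ := hIJ (fun j => if h : (j : ℕ) < s.card then
      ((s.orderIsoOfFin rfl ⟨(j : ℕ), h⟩ : s) : Fin n) else i)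
    refine ⟨g, ?_, ?_⟩
    · intro j hj
      set l := (s.orderIsoOfFin (rfl : s.card = s.card)).symm ⟨j, hj⟩ with hl
      have hlt : (l : ℕ) < H + 1 := lt_of_lt_of_le l.isLt (by omega)
      have h3 := hg ⟨(l : ℕ), hlt⟩
      have hc : ((⟨(l : ℕ), hlt⟩ : Fin (H + 1)) : ℕ) < s.card := l.isLt
      simp only [dif_pos hc] at h3
      have hl2 : (s.orderIsoOfFin rfl ⟨(l : ℕ), hc⟩ : s) = ⟨j, hj⟩ := by
        rw [Fin.eta, hl, OrderIso.apply_symm_apply]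
      rw [hl2] at h3
      exact h3
    · have h3 := hg ⟨H, lt_add_one H⟩
      have hcond : ¬ ((⟨H, lt_add_one H⟩ : Fin (H + 1)) : ℕ) < s.card := by
        show ¬ H < s.card; omega
      simpa only [dif_neg hcond] using h3
  -- fix g := g_{i0} and show it works for all i
  obtain ⟨g, hgs, -⟩ := key ⟨0, hnpos⟩
  have hall : ∀ i : Fin n, g • I i = J i := by
    intro i
    obtain ⟨gi, hgis, hgii⟩ := key i
    have hmem : gi⁻¹ * g ∈ ptStab G Λ := by
      rw [mem_ptStab_iff]
      rintro ω ⟨j, hj, rfl⟩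
      rw [mul_smul, hgs j (Finset.mem_coe.mp hj), ← hgis j (Finset.mem_coe.mp hj),
        inv_smul_smul]
    rw [hs, mem_ptStab_iff] at hmem
    have h4 := hmem (I i) ⟨i, rfl⟩
    rw [mul_smul] at h4
    have h5 : g • I i = gi • I i := by
      calc g • I i = gi • gi⁻¹ • g • I i := (smul_inv_smul _ _).symm
        _ = gi • I i := by rw [h4]
    rw [h5, hgii]
  intro k
  exact ⟨g, fun i => hall (k i)⟩
end

section
/- Let G be a permutation group on a finite set Ω and N a normal subgroup of G. Then the maximum irredundant base length satisfies I(G) ≤ I(N) + ℓ(G/N). -/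
/-- The pointwise stabilizer of the first `i` points of the tuple `b`. -/
def prefixStab (G : Type*) [Group G] {Ω : Type*} [MulAction G Ω] {k : ℕ}
    (b : Fin k → Ω) (i : ℕ) : Subgroup G :=
  ⨅ j : Fin k, ⨅ _ : (j : ℕ) < i, MulAction.stabilizer G (b j)

/-- `b` is an irredundant base: the chain of pointwise stabilizers of initial segments
is strictly decreasing and terminates at the trivial group. -/
def IsIrredBase (G : Type*) [Group G] {Ω : Type*} [MulAction G Ω] {k : ℕ}
    (b : Fin k → Ω) : Prop :=
  (∀ i : Fin k, prefixStab G b ((i : ℕ) + 1) < prefixStab G b (i : ℕ)) ∧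
    prefixStab G b k = ⊥

/-- `I(G, Ω)`: the maximum length of an irredundant base. -/
noncomputable def maxIrr (G : Type*) [Group G] (Ω : Type*) [MulAction G Ω] : ℕ :=
  sSup {k | ∃ b : Fin k → Ω, IsIrredBase G b}

/-- `ℓ(G)`: the maximum length of a strictly decreasing chain of subgroups of `G`. -/
noncomputable def chainLen (G : Type*) [Group G] : ℕ :=
  sSup {k | ∃ c : Fin (k + 1) → Subgroup G, StrictAnti c ∧ c 0 = ⊤}

section Aux

variable {G Ω : Type*} [Group G] [MulAction G Ω] {k : ℕ}

lemma mem_prefixStab {b : Fin k → Ω} {i : ℕ} {g : G} :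
    g ∈ prefixStab G b i ↔ ∀ j : Fin k, (j : ℕ) < i → g • b j = b j := by
  simp [prefixStab, Subgroup.mem_iInf, MulAction.mem_stabilizer_iff]

lemma prefixStab_anti (b : Fin k → Ω) : Antitone (prefixStab G b) := by
  intro i j hij g hg
  rw [mem_prefixStab] at *
  exact fun m hm => hg m (lt_of_lt_of_le hm hij)

lemma prefixStab_zero (b : Fin k → Ω) : prefixStab G b 0 = ⊤ := by
  ext g; simp [mem_prefixStab]

/-- any length in the `maxIrr` set is bounded by the number of subgroups -/
lemma irred_len_le [Finite G] {b : Fin k → Ω} (hb : IsIrredBase G b) :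
    k ≤ Nat.card (Subgroup G) := by
  have hsa : StrictAnti (fun i : Fin (k + 1) => prefixStab G b (i : ℕ)) := by
    intro i j hij
    have hik : (i : ℕ) < k := lt_of_lt_of_le hij (Nat.lt_succ_iff.mp j.isLt)
    calc prefixStab G b (j : ℕ) ≤ prefixStab G b ((i : ℕ) + 1) :=
          prefixStab_anti b hij
      _ < prefixStab G b (i : ℕ) := hb.1 ⟨(i : ℕ), hik⟩
  have := Nat.card_le_card_of_injective _ hsa.injective
  simp only [Nat.card_eq_fintype_card, Fintype.card_fin] at this
  omega

lemma bddAbove_irredSet [Finite G] :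
    BddAbove {k | ∃ b : Fin k → Ω, IsIrredBase G b} := by
  refine ⟨Nat.card (Subgroup G), ?_⟩
  rintro k ⟨b, hb⟩
  exact irred_len_le hb

lemma chain_len_le [Finite G] {c : Fin (k + 1) → Subgroup G} (hc : StrictAnti c) :
    k ≤ Nat.card (Subgroup G) := by
  have := Nat.card_le_card_of_injective _ hc.injective
  simp only [Nat.card_eq_fintype_card, Fintype.card_fin] at this
  omega

lemma bddAbove_chainSet [Finite G] :
    BddAbove {k | ∃ c : Fin (k + 1) → Subgroup G, StrictAnti c ∧ c 0 = ⊤} := by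
  refine ⟨Nat.card (Subgroup G), ?_⟩
  rintro k ⟨c, hc, -⟩
  exact chain_len_le hc

end Aux

/-- If `N ⊴ G`, then `I(G) ≤ I(N) + ℓ(G/N)`. -/
theorem maxIrr_le_maxIrr_normal_add_chainLen {G Ω : Type*} [Group G] [Finite G] [Finite Ω]
    [MulAction G Ω] [FaithfulSMul G Ω] (N : Subgroup G) [N.Normal] :
    maxIrr G Ω ≤ maxIrr N Ω + chainLen (G ⧸ N) := by
  classical
  apply csSup_le'
  rintro k ⟨b, hb⟩
  set Gs : ℕ → Subgroup G := prefixStab G b with hGs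
  have hdrop : ∀ i : Fin k, Gs ((i : ℕ) + 1) < Gs (i : ℕ) := hb.1
  have hbot : Gs k = ⊥ := hb.2
  set S : Finset (Fin k) :=
    Finset.univ.filter (fun i => N ⊓ Gs ((i : ℕ) + 1) < N ⊓ Gs (i : ℕ)) with hSdef
  have hmemS : ∀ i : Fin k, i ∈ S ↔ N ⊓ Gs ((i : ℕ) + 1) < N ⊓ Gs (i : ℕ) := by
    intro i; simp [hSdef]
  have hNle : ∀ i : ℕ, N ⊓ Gs (i + 1) ≤ N ⊓ Gs i := fun i =>
    inf_le_inf_left N (prefixStab_anti b (Nat.le_succ i))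
  have hnotS : ∀ i : Fin k, i ∉ S → N ⊓ Gs ((i : ℕ) + 1) = N ⊓ Gs (i : ℕ) := by
    intro i hi
    rcases lt_or_eq_of_le (hNle (i : ℕ)) with h | h
    · exact absurd ((hmemS i).mpr h) hi
    · exact h
  -- Part 1 : S.card ≤ maxIrr N Ω
  have part1 : S.card ≤ maxIrr N Ω := by
    set s := S.card with hs
    set σ : Fin s ≃o {x // x ∈ S} := S.orderIsoOfFin rfl with hσ
    set sub : Fin s → Ω := fun j => b ((σ j : Fin k)) with hsub
    have hsubmem : ∀ (n : N) (i : ℕ),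
        n ∈ prefixStab N sub i ↔ ∀ l : Fin s, (l : ℕ) < i →
          (n : G) • b ((σ l : Fin k)) = b ((σ l : Fin k)) := by
      intro n i
      rw [mem_prefixStab]
      simp [hsub, Subgroup.smul_def]
    have hirr : IsIrredBase N sub := by
      constructor
      · intro j
        have hle : prefixStab N sub ((j : ℕ) + 1) ≤ prefixStab N sub (j : ℕ) :=
          prefixStab_anti sub (Nat.le_succ _)
        set t : Fin k := (σ j : Fin k) with ht
        obtain ⟨n, hn_in, hn_out⟩ := SetLike.exists_of_lt ((hmemS t).mp (σ j).2)
        have hnN : n ∈ N := hn_in.1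
        have hfix : ∀ m : Fin k, (m : ℕ) < (t : ℕ) → n • b m = b m :=
          mem_prefixStab.mp hn_in.2
        have hmemj : (⟨n, hnN⟩ : N) ∈ prefixStab N sub (j : ℕ) := by
          rw [hsubmem]
          intro l hl
          apply hfix
          have : σ l < σ j := σ.strictMono (by exact Fin.lt_def.mpr hl)
          exact this
        have hnmemj : (⟨n, hnN⟩ : N) ∉ prefixStab N sub ((j : ℕ) + 1) := by
          intro hmem
          rw [hsubmem] at hmem
          have hfixt : n • b t = b t := hmem j (Nat.lt_succ_self _)
          apply hn_out
          have hmem2 : n ∈ Gs ((t : ℕ) + 1) := by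
            rw [hGs, mem_prefixStab]
            intro m hm
            rcases Nat.lt_succ_iff_lt_or_eq.mp hm with h | h
            · exact hfix m h
            · have : m = t := Fin.ext h
              rw [this]; exact hfixt
          exact Subgroup.mem_inf.mpr ⟨hnN, hmem2⟩
        refine lt_of_le_of_ne hle ?_
        intro h
        exact hnmemj (h ▸ hmemj)
      · rw [eq_bot_iff]
        intro n hn
        have hall : ∀ t : ℕ, ∀ ht : t < k, (n : G) • b ⟨t, ht⟩ = b ⟨t, ht⟩ := by
          intro t
          induction t using Nat.strong_induction_on with
          | _ t IH =>
            intro ht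
            by_cases hts : (⟨t, ht⟩ : Fin k) ∈ S
            · set j : Fin s := σ.symm ⟨⟨t, ht⟩, hts⟩ with hj
              have hσj : (σ j : Fin k) = ⟨t, ht⟩ := by
                rw [hj, OrderIso.apply_symm_apply]
              have := (hsubmem n s).mp hn j j.isLt
              rwa [hσj] at this
            · have heq := hnotS ⟨t, ht⟩ hts
              have hnt' : (n : G) ∈ Gs t := by
                rw [hGs, mem_prefixStab]
                intro m hm
                have := IH (m : ℕ) hm m.isLt
                simpa using this
              have hnt : (n : G) ∈ N ⊓ Gs t := Subgroup.mem_inf.mpr ⟨n.2, hnt'⟩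
              have hnt1 : (n : G) ∈ Gs (t + 1) := (heq ▸ hnt).2
              rw [hGs, mem_prefixStab] at hnt1
              exact hnt1 ⟨t, ht⟩ (Nat.lt_succ_self _)
        have hnGk : (n : G) ∈ Gs k := by
          rw [hGs, mem_prefixStab]
          intro m hm
          have := hall (m : ℕ) m.isLt
          simpa using this
        rw [hbot, Subgroup.mem_bot] at hnGk
        rw [Subgroup.mem_bot]
        exact Subtype.ext (by rw [OneMemClass.coe_one]; exact hnGk)
    exact le_csSup bddAbove_irredSet ⟨sub, hirr⟩
  -- Part 2 : Sᶜ.card ≤ chainLen (G ⧸ N)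
  have part2 : Sᶜ.card ≤ chainLen (G ⧸ N) := by
    set φ := QuotientGroup.mk' N with hφ
    set m := Sᶜ.card with hm
    set τ : Fin m ≃o {x // x ∈ Sᶜ} := Sᶜ.orderIsoOfFin rfl with hτ
    have hkey : ∀ t : Fin k, t ∉ S →
        Subgroup.map φ (Gs ((t : ℕ) + 1)) < Subgroup.map φ (Gs (t : ℕ)) := by
      intro t htS
      refine lt_of_le_of_ne (Subgroup.map_mono (prefixStab_anti b (Nat.le_succ _))) ?_
      intro heq
      have hsup : Gs ((t : ℕ) + 1) ⊔ N = Gs (t : ℕ) ⊔ N := by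
        have h1 := Subgroup.comap_map_eq φ (Gs ((t : ℕ) + 1))
        have h2 := Subgroup.comap_map_eq φ (Gs (t : ℕ))
        rw [heq, h2] at h1
        rw [hφ, QuotientGroup.ker_mk'] at h1
        exact h1.symm
      have hinf := hnotS t htS
      have : Gs (t : ℕ) ≤ Gs ((t : ℕ) + 1) := by
        intro x hx
        have hx' : x ∈ ((Gs ((t : ℕ) + 1) ⊔ N : Subgroup G) : Set G) := by
          rw [hsup]; exact Subgroup.mem_sup_left hx
        rw [Subgroup.mul_normal] at hx'
        obtain ⟨h, hh, nn, hnn, hxe⟩ := hx'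
        have hh' : h ∈ Gs ((t : ℕ) + 1) := hh
        have hnn' : nn ∈ N := hnn
        have hhx : h⁻¹ * x ∈ N ⊓ Gs (t : ℕ) := by
          refine Subgroup.mem_inf.mpr ⟨?_, ?_⟩
          · have : h⁻¹ * x = nn := by rw [← hxe]; group
            rw [this]; exact hnn'
          · exact mul_mem (inv_mem ((prefixStab_anti b (Nat.le_succ _)) hh')) hx
        rw [← hinf] at hhx
        have hxdec : x = h * (h⁻¹ * x) := by group
        rw [hxdec]
        exact mul_mem hh' (Subgroup.mem_inf.mp hhx).2
      exact absurd this (hdrop t).not_ge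
    set c : Fin (m + 1) → Subgroup (G ⧸ N) :=
      Fin.cases ⊤ (fun j => Subgroup.map φ (Gs (((τ j : Fin k) : ℕ) + 1))) with hc
    have hc0 : c 0 = ⊤ := by
      simp only [hc]; exact Fin.cases_zero
    have hcsucc : ∀ j : Fin m, c j.succ = Subgroup.map φ (Gs (((τ j : Fin k) : ℕ) + 1)) := by
      intro j; simp only [hc]; exact Fin.cases_succ j
    have hsa : StrictAnti c := by
      rw [Fin.strictAnti_iff_succ_lt]
      intro j
      rw [hcsucc j]
      have h1 : Subgroup.map φ (Gs (((τ j : Fin k) : ℕ) + 1)) <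
          Subgroup.map φ (Gs ((τ j : Fin k) : ℕ)) :=
        hkey (τ j : Fin k) (Finset.mem_compl.mp (τ j).2)
      refine lt_of_lt_of_le h1 ?_
      rcases Fin.eq_zero_or_eq_succ j.castSucc with h0 | ⟨i, hi⟩
      · rw [h0, hc0]; exact le_top
      · rw [hi, hcsucc i]
        apply Subgroup.map_mono
        apply prefixStab_anti
        have hij : i < j := by
          have : ((i : ℕ) + 1) = (j : ℕ) := by
            have := congrArg (fun x : Fin (m + 1) => (x : ℕ)) hi
            simpa using this.symm
          exact Fin.lt_def.mpr (by omega)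
        have : τ i < τ j := τ.strictMono hij
        have : ((τ i : Fin k) : ℕ) < ((τ j : Fin k) : ℕ) := this
        omega
    exact le_csSup bddAbove_chainSet ⟨c, hsa, hc0⟩
  have hcard : S.card + Sᶜ.card = k := by
    rw [Finset.card_add_card_compl, Fintype.card_fin]
  calc k = S.card + Sᶜ.card := hcard.symm
    _ ≤ maxIrr N Ω + chainLen (G ⧸ N) := add_le_add part1 part2
end

section
/- Let G = Sp_{2m}(q) with q a power of 2 act on the set Ω of quadratic forms θ_a polarising to φ via θ^x(u) = θ(u x^{−1}). For the transvection t_c one has θ_a^{t_c} = θ_{a + (√(θ_a(c)) + 1)c}, where √ denotes the (well-defined) square root in F_q. -/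
open Matrix

/-- The standard symplectic form `φ(u,v) = u f vᵀ` on `F_q^{2m}` given by the block matrix
`f = [[0, I], [I, 0]]`. -/
def sympForm {K : Type*} [Field K] {m : ℕ} (u v : (Fin m ⊕ Fin m) → K) : K :=
  u ⬝ᵥ (Matrix.fromBlocks (0 : Matrix (Fin m) (Fin m) K) 1 1 0).mulVec v

/-- The quadratic form `θ₀(u) = u e uᵀ` given by the block matrix `e = [[0, I], [0, 0]]`. -/
def theta0 {K : Type*} [Field K] {m : ℕ} (u : (Fin m ⊕ Fin m) → K) : K :=
  u ⬝ᵥ (Matrix.fromBlocks (0 : Matrix (Fin m) (Fin m) K) 1 0 0).mulVec u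

/-- The quadratic form `θ_a(u) = θ₀(u) + φ(u,a)²` polarising to `φ`. -/
def thetaA {K : Type*} [Field K] {m : ℕ} (a u : (Fin m ⊕ Fin m) → K) : K :=
  theta0 u + sympForm u a ^ 2

/-- The transvection `t_c : u ↦ u + φ(u,c)c`. -/
def transvection {K : Type*} [Field K] {m : ℕ} (c : (Fin m ⊕ Fin m) → K) :
    ((Fin m ⊕ Fin m) → K) → (Fin m ⊕ Fin m) → K :=
  fun u => u + sympForm u c • c

lemma polarise {K : Type*} [Field K] {m : ℕ} (u c : (Fin m ⊕ Fin m) → K) :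
    u ⬝ᵥ (Matrix.fromBlocks (0 : Matrix (Fin m) (Fin m) K) 1 0 0).mulVec c
      + c ⬝ᵥ (Matrix.fromBlocks (0 : Matrix (Fin m) (Fin m) K) 1 0 0).mulVec u
      = sympForm u c := by
  have hE : (Matrix.fromBlocks (0 : Matrix (Fin m) (Fin m) K) 1 1 0)
      = (Matrix.fromBlocks (0 : Matrix (Fin m) (Fin m) K) 1 0 0 : Matrix (Fin m ⊕ Fin m) (Fin m ⊕ Fin m) K) + (Matrix.fromBlocks (0 : Matrix (Fin m) (Fin m) K) 1 0 0 : Matrix (Fin m ⊕ Fin m) (Fin m ⊕ Fin m) K)ᵀ := by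
    simp [Matrix.fromBlocks_transpose, Matrix.fromBlocks_add]
  have h2 : c ⬝ᵥ (Matrix.fromBlocks (0 : Matrix (Fin m) (Fin m) K) 1 0 0).mulVec u
      = u ⬝ᵥ ((Matrix.fromBlocks (0 : Matrix (Fin m) (Fin m) K) 1 0 0)ᵀ).mulVec c := by
    rw [Matrix.mulVec_transpose, Matrix.dotProduct_mulVec, dotProduct_comm]
  rw [sympForm, hE, Matrix.add_mulVec, dotProduct_add, h2]

/-- The action of the transvection `t_c` on the quadratic form `θ_a` (given by
`θ^x(u) = θ(u x⁻¹)`, noting `t_c⁻¹ = t_c`) satisfies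
`θ_a^{t_c} = θ_{a + (√(θ_a(c)) + 1) c}`, where `s = √(θ_a(c))` is the unique square root
in characteristic 2. -/
theorem thetaA_transvection {K : Type*} [Field K] [Fintype K] [CharP K 2] (m : ℕ)
    (a c : (Fin m ⊕ Fin m) → K) (s : K) (hs : s ^ 2 = thetaA a c) :
    ∀ u, thetaA a (transvection c u) = thetaA (a + (s + 1) • c) u := by
  intro u
  have h2 : (2 : K) = 0 := CharTwo.two_eq_zero
  have hpq := polarise u c
  rw [thetaA, theta0] at hs
  simp only [thetaA, theta0, _root_.transvection, sympForm, Matrix.mulVec_add, Matrix.mulVec_smul,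
    dotProduct_add, add_dotProduct, dotProduct_smul,
    smul_dotProduct, smul_eq_mul] at *
  set E := (Matrix.fromBlocks (0 : Matrix (Fin m) (Fin m) K) 1 0 0 : Matrix (Fin m ⊕ Fin m) (Fin m ⊕ Fin m) K)
  set F := (Matrix.fromBlocks (0 : Matrix (Fin m) (Fin m) K) 1 1 0 : Matrix (Fin m ⊕ Fin m) (Fin m ⊕ Fin m) K)
  set t := u ⬝ᵥ F.mulVec c
  set x := u ⬝ᵥ E.mulVec u
  set p := u ⬝ᵥ E.mulVec c
  set q := c ⬝ᵥ E.mulVec u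
  set r := c ⬝ᵥ E.mulVec c
  set w := u ⬝ᵥ F.mulVec a
  set z := c ⬝ᵥ F.mulVec a
  linear_combination t * hpq + t^2 * hs + (w*t*z - s*t^2 - w*s*t - w*t + t^2*r + t^2*z^2 - t^2*s^2) * h2
end

section
/- Let G ≤ PΓL_n(q) act on pairs {U, W} of subspaces with dim U = m < n/2 and dim W = n − m, and let Λ be an independent set of such pairs. Define the bipartite graph Γ whose vertices are the m-spaces and (n−m)-spaces occurring in Λ, with an edge for each pair in Λ. Then Γ contains no path of length 3; equivalently, Γ has no path of length exceeding 2. -/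
/-- The multiplicative group structure on `AddAut V` that Mathlib used to provide
(multiplication is composition), which current Mathlib has replaced by an additive one. -/
instance AddAut.instGroupComp (A : Type*) [Add A] : Group (AddAut A) where
  mul g h := AddEquiv.trans h g
  one := AddEquiv.refl _
  inv := AddEquiv.symm
  mul_assoc _ _ _ := rfl
  one_mul _ := rfl
  mul_one _ := rfl
  inv_mul_cancel := AddEquiv.self_trans_symm

section GammaL

variable (K V : Type*) [Field K] [AddCommGroup V] [Module K V]

/-- `ΓL(V)`: the group of semilinear automorphisms of `V`, realized as the subgroup of
additive automorphisms which are semilinear with respect to some field automorphism. -/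
def GammaL : Subgroup (AddAut V) where
  carrier := {g | ∃ σ : K ≃+* K, ∀ (c : K) (v : V), g (c • v) = σ c • g v}
  one_mem' := ⟨RingEquiv.refl K, fun c v => rfl⟩
  mul_mem' := by
    rintro g h ⟨σ, hσ⟩ ⟨τ, hτ⟩
    exact ⟨τ.trans σ, fun c v => by
      show g (h (c • v)) = _
      rw [hτ, hσ]
      rfl⟩
  inv_mem' := by
    rintro g ⟨σ, hσ⟩
    refine ⟨σ.symm, fun c v => ?_⟩
    show g.symm (c • v) = σ.symm c • g.symm v
    apply g.injective
    rw [hσ]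
    simp

variable {K V}

/-- The image of a subspace under a semilinear automorphism is a subspace. -/
def gammaSMul (g : GammaL K V) (W : Submodule K V) : Submodule K V where
  carrier := (g : AddAut V) '' W
  add_mem' := by
    rintro _ _ ⟨x, hx, rfl⟩ ⟨y, hy, rfl⟩
    exact ⟨x + y, W.add_mem hx hy, map_add _ _ _⟩
  zero_mem' := ⟨0, W.zero_mem, map_zero _⟩
  smul_mem' := by
    rintro c _ ⟨x, hx, rfl⟩
    obtain ⟨σ, hσ⟩ := g.2
    exact ⟨σ.symm c • x, W.smul_mem _ hx, by rw [hσ, RingEquiv.apply_symm_apply]⟩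

theorem mem_gammaSMul {g : GammaL K V} {W : Submodule K V} {v : V} :
    v ∈ gammaSMul g W ↔ ∃ x ∈ W, (g : AddAut V) x = v := Iff.rfl

/-- The natural action of `ΓL(V)` on the subspaces of `V`. -/
instance : SMul (GammaL K V) (Submodule K V) := ⟨gammaSMul⟩

instance : MulAction (GammaL K V) (Submodule K V) where
  one_smul W := by
    ext v
    constructor
    · rintro ⟨x, hx, rfl⟩
      exact hx
    · intro hv
      exact ⟨v, hv, rfl⟩
  mul_smul g h W := by
    ext v
    constructor
    · rintro ⟨x, hx, rfl⟩
      exact ⟨(h : AddAut V) x, ⟨x, hx, rfl⟩, rfl⟩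
    · rintro ⟨_, ⟨x, hx, rfl⟩, rfl⟩
      exact ⟨x, hx, rfl⟩

end GammaL

set_option synthInstance.maxHeartbeats 1000000
set_option maxHeartbeats 1000000

/-- Let `G ≤ ΓL_n(q)` act on pairs `(U, W)` of subspaces of `V = F_q^n` with
`dim U = m < n/2` and `dim W = n − m` (either all pairs complementary, or `U < W` for
all pairs), and let `Λ` be an independent set of such pairs.  Then the associated
bipartite graph whose edges are the pairs in `Λ` contains no path of length 3:
if `(U, W), (U', W), (U', W')` are edges of `Λ`, then `U = U'` or `W = W'`. -/
theorem no_path_of_length_three {K : Type*} [Field K] [Fintype K] {n m : ℕ}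
    (hmn : 2 * m < n)
    (G : Subgroup (GammaL K (Fin n → K)))
    (Λ : Finset (Submodule K (Fin n → K) × Submodule K (Fin n → K)))
    (hdim : ∀ p ∈ Λ, Module.finrank K p.1 = m ∧ Module.finrank K p.2 = n - m)
    (hstruct : (∀ p ∈ Λ, IsCompl p.1 p.2) ∨ (∀ p ∈ Λ, p.1 < p.2))
    (hindep : IsIndep G (Λ : Set (Submodule K (Fin n → K) × Submodule K (Fin n → K)))) :
    ∀ p q r, p ∈ Λ → q ∈ Λ → r ∈ Λ → p.2 = q.2 → q.1 = r.1 →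
      p.1 = q.1 ∨ q.2 = r.2 := by
  classical
  intro p q r hp hq hr hpq hqr
  by_contra h
  push_neg at h
  obtain ⟨h1, h2⟩ := h
  have hqp : p ≠ q := fun hpq' => h1 (congrArg Prod.fst hpq')
  have hqr' : r ≠ q := fun hrq' => h2 ((congrArg Prod.snd hrq').symm)
  refine hindep ((Λ.erase q : Finset _) : Set _) ?_ ?_
  · exact_mod_cast Finset.erase_ssubset hq
  · have mem_pt : ∀ (Δ : Set (Submodule K (Fin n → K) × Submodule K (Fin n → K)))
        (g : G), g ∈ ptStab G Δ ↔ ∀ ω ∈ Δ, g • ω = ω := by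
      intro Δ g
      simp only [ptStab, Subgroup.mem_iInf, MulAction.mem_stabilizer_iff]
    apply le_antisymm
    · intro g hg
      rw [mem_pt] at hg ⊢
      intro ω hω
      rcases eq_or_ne ω q with heq | hne
      · subst heq
        have hpΔ : p ∈ ((Λ.erase ω : Finset _) : Set _) :=
          Finset.mem_coe.mpr (Finset.mem_erase.mpr ⟨hqp, hp⟩)
        have hrΔ : r ∈ ((Λ.erase ω : Finset _) : Set _) :=
          Finset.mem_coe.mpr (Finset.mem_erase.mpr ⟨hqr', hr⟩)
        have h1' := hg p hpΔ
        have h2' := hg r hrΔ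
        have hgp2 : g • p.2 = p.2 := congrArg Prod.snd h1'
        have hgr1 : g • r.1 = r.1 := congrArg Prod.fst h2'
        have : g • ω = (g • ω.1, g • ω.2) := rfl
        rw [this]
        refine Prod.ext ?_ ?_
        · rw [hqr]; exact hgr1
        · rw [← hpq]; exact hgp2
      · exact hg ω (Finset.mem_coe.mpr (Finset.mem_erase.mpr ⟨hne, Finset.mem_coe.mp hω⟩))
    · intro g hg
      rw [mem_pt] at hg ⊢
      intro ω hω
      exact hg ω (Finset.mem_coe.mpr (Finset.mem_of_mem_erase (Finset.mem_coe.mp hω)))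
end
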